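/- For all x, y with 0 < y < x ≤ π and every positive integer M, |Σ_{k=1}^{M} (e^{ikx} - e^{iky})/k| ≤ π(log x - log y). -/

import Mathlib

open scoped Real

-- Dirichlet kernel type bound: for 0 < s ≤ π,
-- |∑ k in Icc 1 M, exp(I k s)| ≤ π / s
lemma dirichlet_bound (s : ℝ) (hs : 0 < s) (hsπ : s ≤ π) (M : ℕ) :
    ‖∑ k ∈ Finset.Icc 1 M, Complex.exp (Complex.I * k * s)‖ ≤ π / s := by
  set z : ℂ := Complex.exp (s * Complex.I) with hz
  have habs_z : ‖z‖ = 1 := Complex.norm_exp_ofReal_mul_I s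
  have hcos : Real.cos s ≤ 1 - 2 / π ^ 2 * s ^ 2 :=
    Real.cos_le_one_sub_mul_cos_sq (by rw [abs_of_pos hs]; exact hsπ)
  have hsq : ‖z - 1‖ ^ 2 = 2 - 2 * Real.cos s := by
    rw [Complex.sq_norm, hz, Complex.exp_mul_I]
    simp [Complex.normSq_apply, Complex.add_re, Complex.add_im,
      Complex.cos_ofReal_re, Complex.sin_ofReal_re]
    nlinarith [Real.sin_sq_add_cos_sq s]
  have hlb : 2 * s / π ≤ ‖z - 1‖ := by
    have hπ := Real.pi_pos
    have h1 : (2 * s / π) ^ 2 ≤ ‖z - 1‖ ^ 2 := by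
      rw [hsq]
      have h2 : 2 / π ^ 2 * s ^ 2 ≤ 1 - Real.cos s := by linarith
      have h3 : (2 * s / π) ^ 2 = 2 * (2 / π ^ 2 * s ^ 2) := by
        field_simp
      rw [h3]; linarith
    have h0 : 0 ≤ 2 * s / π := by positivity
    exact (pow_le_pow_iff_left₀ h0 (norm_nonneg _) two_ne_zero).mp h1
  have hzpos : 0 < ‖z - 1‖ := lt_of_lt_of_le (by positivity) hlb
  have hz1 : z ≠ 1 := by
    intro h; rw [h] at hzpos; simp at hzpos
  have hterm : ∀ k : ℕ, Complex.exp (Complex.I * k * s) = z ^ k := by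
    intro k
    rw [hz, ← Complex.exp_nat_mul]
    ring_nf
  have hsum : (∑ k ∈ Finset.Icc 1 M, Complex.exp (Complex.I * k * s))
      = z * ∑ j ∈ Finset.range M, z ^ j := by
    simp_rw [hterm]
    rw [← Finset.Ico_add_one_right_eq_Icc, Finset.sum_Ico_eq_sum_range]
    simp [pow_add, pow_one, Finset.mul_sum]
  rw [hsum, norm_mul, habs_z, one_mul, geom_sum_eq hz1, norm_div]
  have h2 : ‖z ^ M - 1‖ ≤ 2 := by
    calc ‖z ^ M - 1‖ ≤ ‖z ^ M‖ + ‖(1 : ℂ)‖ :=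
          norm_sub_le _ _
    _ ≤ 2 := by rw [norm_pow, habs_z]; norm_num
  have hπ := Real.pi_pos
  calc ‖z ^ M - 1‖ / ‖z - 1‖
      ≤ 2 / (2 * s / π) := div_le_div₀ (by norm_num) h2 (by positivity) hlb
  _ = π / s := by
      have hs0 : s ≠ 0 := hs.ne'
      field_simp

theorem exp_sum_diff_le_pi_log (x y : ℝ) (hy : 0 < y) (hyx : y < x) (hx : x ≤ π)
    (M : ℕ) (hM : 0 < M) :
    ‖(∑ k ∈ Finset.Icc 1 M,
        (Complex.exp (Complex.I * k * x) - Complex.exp (Complex.I * k * y)) / k)‖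
      ≤ π * (Real.log x - Real.log y) := by
  have hx0 : 0 < x := hy.trans hyx
  have hπ := Real.pi_pos
  -- each term is an integral
  have hterm : ∀ k ∈ Finset.Icc 1 M,
      (Complex.exp (Complex.I * k * x) - Complex.exp (Complex.I * k * y)) / k
        = ∫ s in y..x, Complex.I * Complex.exp (Complex.I * k * s) := by
    intro k hk
    have hk1 : 1 ≤ k := (Finset.mem_Icc.mp hk).1
    have hk0 : (k : ℂ) ≠ 0 := Nat.cast_ne_zero.mpr (by omega)
    have hc : Complex.I * (k : ℂ) ≠ 0 := mul_ne_zero Complex.I_ne_zero hk0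
    rw [intervalIntegral.integral_const_mul, integral_exp_mul_complex hc]
    field_simp
  rw [Finset.sum_congr rfl hterm]
  have hint : ∀ k ∈ Finset.Icc 1 M, IntervalIntegrable
      (fun s : ℝ => Complex.I * Complex.exp (Complex.I * k * s))
      MeasureTheory.volume y x := by
    intro k _
    apply Continuous.intervalIntegrable
    fun_prop
  rw [← intervalIntegral.integral_finset_sum hint]
  have hbound : ∀ᵐ (t : ℝ) ∂(MeasureTheory.volume.restrict (Set.uIoc y x)),
      ‖∑ k ∈ Finset.Icc 1 M, Complex.I * Complex.exp (Complex.I * k * t)‖ ≤ π / t := by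
    filter_upwards [MeasureTheory.ae_restrict_mem measurableSet_uIoc] with t ht
    rw [Set.uIoc_of_le hyx.le] at ht
    have ht0 : 0 < t := hy.trans ht.1
    have htπ : t ≤ π := ht.2.trans hx
    rw [← Finset.mul_sum, norm_mul,
      Complex.norm_I, one_mul]
    exact dirichlet_bound t ht0 htπ M
  have hgint : IntervalIntegrable (fun s : ℝ => π / s) MeasureTheory.volume y x := by
    apply ContinuousOn.intervalIntegrable
    apply ContinuousOn.div continuousOn_const continuousOn_id
    intro s hs
    rw [Set.uIcc_of_le hyx.le] at hs
    exact ne_of_gt (lt_of_lt_of_le hy hs.1)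
  have hval : (∫ t in y..x, π / t) = π * (Real.log x - Real.log y) := by
    simp only [div_eq_mul_inv]
    rw [intervalIntegral.integral_const_mul, integral_inv_of_pos hy hx0,
      Real.log_div hx0.ne' hy.ne']
  calc ‖∫ t in y..x, ∑ k ∈ Finset.Icc 1 M, Complex.I * Complex.exp (Complex.I * k * t)‖
      ≤ |∫ t in y..x, π / t| :=
        intervalIntegral.norm_integral_le_abs_of_norm_le hbound hgint
  _ = π * (Real.log x - Real.log y) := by
      rw [hval, abs_of_nonneg]
      have := Real.log_le_log hy hyx.le
      nlinarith [Real.log_le_log hy hyx.le]
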